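/- Let μ be a probability measure on {0,1}^E satisfying the FKG inequality, let f: {0,1}^E → [0,1] be an increasing function, let C_x = {ω_{e_i} = 0 for all i = 1,…,d} be the event that all edges incident to a vertex x are closed, and assume μ[C_x] > 0. Then μ[f] - μ[f | C_x] ≤ (1/μ[C_x]) Σ_{i=1}^d Cov_μ(f, ω_{e_i}). -/

import Mathlib

open MeasureTheory

section aux
variable {E : Type*} [Fintype E]

lemma measSet_all' (s : Set (E → Bool)) : MeasurableSet s :=
  s.to_countable.measurableSet

lemma integ_all' (μ : Measure (E → Bool)) [IsFiniteMeasure μ] (φ : (E → Bool) → ℝ)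
    (C : ℝ) (h : ∀ ω, |φ ω| ≤ C) : Integrable φ μ := by
  have hm : Measurable φ := fun s _ => measSet_all' _
  exact (integrable_const C).mono' hm.aestronglyMeasurable
    (ae_of_all _ (by simpa [Real.norm_eq_abs] using h))

end aux

open MeasureTheory in
theorem stmt_6 {E : Type*} [Fintype E] (μ : Measure (E → Bool)) [IsProbabilityMeasure μ]
    (hFKG : ∀ f g : (E → Bool) → ℝ, Monotone f → Monotone g →
      (∫ ω, f ω ∂μ) * (∫ ω, g ω ∂μ) ≤ ∫ ω, f ω * g ω ∂μ)
    (d : ℕ) (e : Fin d → E) (f : (E → Bool) → ℝ) (hf : Monotone f)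
    (hf01 : ∀ ω, f ω ∈ Set.Icc (0:ℝ) 1)
    (Cx : Set (E → Bool)) (hCx : Cx = {ω | ∀ i, ω (e i) = false})
    (hpos : 0 < (μ Cx).toReal) :
    (∫ ω, f ω ∂μ) - (∫ ω in Cx, f ω ∂μ) / (μ Cx).toReal
      ≤ (1 / (μ Cx).toReal) *
        ∑ i : Fin d, ((∫ ω, f ω * (if ω (e i) then (1:ℝ) else 0) ∂μ)
          - (∫ ω, f ω ∂μ) * (∫ ω, (if ω (e i) then (1:ℝ) else 0) ∂μ)) := by
  classical
  -- abbreviations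
  set p := (μ Cx).toReal with hp
  have hpne : p ≠ 0 := ne_of_gt hpos
  set g : Fin d → (E → Bool) → ℝ := fun i ω => if ω (e i) then 1 else 0 with hgdef
  set u : Fin d → (E → Bool) → ℝ :=
    fun i ω => if (ω (e i) = true ∧ ∃ j, j < i ∧ ω (e j) = true) then 1 else 0 with hudef
  set ind : (E → Bool) → ℝ := fun ω => if ω ∈ Cx then 1 else 0 with hinddef
  set indc : (E → Bool) → ℝ := fun ω => if ∃ i, ω (e i) = true then 1 else 0 with hindcdef
  -- basic bounds
  have hfb : ∀ ω, |f ω| ≤ 1 := fun ω => abs_le.2 ⟨by linarith [(hf01 ω).1], (hf01 ω).2⟩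
  -- integrability
  have hint_f : Integrable f μ := integ_all' μ f 1 hfb
  have hint_g : ∀ i, Integrable (g i) μ :=
    fun i => integ_all' μ (g i) 1 (fun ω => by simp only [hgdef]; split <;> norm_num)
  have hint_u : ∀ i, Integrable (u i) μ :=
    fun i => integ_all' μ (u i) 1 (fun ω => by simp only [hudef]; split <;> norm_num)
  have hint_fg : ∀ i, Integrable (fun ω => f ω * g i ω) μ :=
    fun i => integ_all' μ _ 1 (fun ω => by
      simp only [hgdef, abs_mul]
      split <;> simp [hfb ω])
  have hint_fu : ∀ i, Integrable (fun ω => f ω * u i ω) μ :=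
    fun i => integ_all' μ _ 1 (fun ω => by
      simp only [hudef, abs_mul]
      split <;> simp [hfb ω])
  have hint_find : Integrable (fun ω => f ω * ind ω) μ :=
    integ_all' μ _ 1 (fun ω => by
      simp only [hinddef, abs_mul]
      split <;> simp [hfb ω])
  have hint_findc : Integrable (fun ω => f ω * indc ω) μ :=
    integ_all' μ _ 1 (fun ω => by
      simp only [hindcdef, abs_mul]
      split <;> simp [hfb ω])
  have hint_indc : Integrable indc μ :=
    integ_all' μ _ 1 (fun ω => by simp only [hindcdef]; split <;> norm_num)
  -- monotonicity of u
  have hu_mono : ∀ i, Monotone (u i) := by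
    intro i a b hab
    simp only [hudef]
    by_cases h : a (e i) = true ∧ ∃ j, j < i ∧ a (e j) = true
    · obtain ⟨h1, j, hj, h2⟩ := h
      have hb1 : b (e i) = true := by
        have := hab (e i); rw [h1] at this; exact Bool.eq_true_of_true_le this
      have hb2 : b (e j) = true := by
        have := hab (e j); rw [h2] at this; exact Bool.eq_true_of_true_le this
      rw [if_pos ⟨h1, j, hj, h2⟩, if_pos ⟨hb1, j, hj, hb2⟩]
    · rw [if_neg h]; split <;> norm_num
  -- key pointwise identity
  have hpoint : ∀ ω, indc ω = ∑ i : Fin d, (g i ω - u i ω) := by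
    intro ω
    by_cases hex : ∃ i, ω (e i) = true
    · set T : Finset (Fin d) := Finset.univ.filter (fun i => ω (e i) = true) with hT
      have hne : T.Nonempty := by
        obtain ⟨i, hi⟩ := hex; exact ⟨i, by simp [hT, hi]⟩
      set i0 := T.min' hne with hi0
      have h0 : ω (e i0) = true := by
        have := T.min'_mem hne; simp [hT] at this; exact this
      have hmin : ∀ j, ω (e j) = true → i0 ≤ j := by
        intro j hj; exact T.min'_le j (by simp [hT, hj])
      have hterm : ∀ i, g i ω - u i ω = if i = i0 then 1 else 0 := by
        intro i
        by_cases hii : i = i0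
        · have hnu : ¬ (ω (e i0) = true ∧ ∃ j, j < i0 ∧ ω (e j) = true) := by
            rintro ⟨-, j, hj, hjt⟩
            exact absurd (hmin j hjt) (not_le.2 hj)
          rw [hii]
          simp only [hgdef, hudef]
          rw [if_pos h0, if_neg hnu]
          norm_num
        · by_cases hit : ω (e i) = true
          · have hlt : i0 < i := lt_of_le_of_ne (hmin i hit) (fun h => hii h.symm)
            have hu1 : ω (e i) = true ∧ ∃ j, j < i ∧ ω (e j) = true := ⟨hit, i0, hlt, h0⟩
            simp only [hgdef, hudef]
            rw [if_pos hit, if_pos hu1, if_neg hii]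
            norm_num
          · simp only [hgdef, hudef]
            rw [if_neg hit, if_neg (fun h => hit h.1), if_neg hii]
            norm_num
      simp only [hterm, hindcdef]
      simp [hex, Finset.sum_ite_eq']
    · push_neg at hex
      have : ∀ i : Fin d, g i ω - u i ω = 0 := by
        intro i; simp [hgdef, hudef, hex i]
      simp only [hindcdef, this]
      simp [hex]
  -- indicator facts
  have hone : ∀ ω, ind ω + indc ω = 1 := by
    intro ω
    by_cases hex : ∃ i, ω (e i) = true
    · have : ω ∉ Cx := by
        rw [hCx]; obtain ⟨i, hi⟩ := hex; intro h; exact absurd (h i) (by simp [hi])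
      simp [hinddef, hindcdef, hex, this]
    · have : ω ∈ Cx := by
        rw [hCx]; push_neg at hex; intro i; simpa using hex i
      simp [hinddef, hindcdef, hex, this]
  -- I = ∫ f * ind
  have hI : ∫ ω in Cx, f ω ∂μ = ∫ ω, f ω * ind ω ∂μ := by
    rw [← integral_indicator (measSet_all' Cx)]
    congr 1; ext ω
    simp [Set.indicator_apply, hinddef, mul_ite]
  -- p = ∫ ind
  have hpind : p = ∫ ω, ind ω ∂μ := by
    have : ind = Set.indicator Cx (fun _ => (1:ℝ)) := by
      ext ω; simp [hinddef, Set.indicator_apply]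
    rw [this, integral_indicator_const _ (measSet_all' Cx)]
    simp [hp]
    rfl
  -- ∫ indc = 1 - p
  have hq : ∫ ω, indc ω ∂μ = 1 - p := by
    have h1 : ∫ ω, (ind ω + indc ω) ∂μ = 1 := by
      simp only [hone]; simp
    rw [integral_add (integ_all' μ ind 1 (fun ω => by simp only [hinddef]; split <;> norm_num)) hint_indc] at h1
    rw [← hpind] at h1; linarith
  -- split m
  have hsplit : ∫ ω, f ω ∂μ = (∫ ω, f ω * ind ω ∂μ) + ∫ ω, f ω * indc ω ∂μ := by
    rw [← integral_add hint_find hint_findc]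
    congr 1; ext ω
    rw [← mul_add, hone ω, mul_one]
  set m := ∫ ω, f ω ∂μ with hm
  -- decompose f*indc and indc as sums
  have hN : ∫ ω, f ω * indc ω ∂μ
      = ∑ i : Fin d, ((∫ ω, f ω * g i ω ∂μ) - ∫ ω, f ω * u i ω ∂μ) := by
    have h1 : ∀ ω, f ω * indc ω = ∑ i : Fin d, (f ω * g i ω - f ω * u i ω) := by
      intro ω; rw [hpoint ω, Finset.mul_sum]
      exact Finset.sum_congr rfl fun i _ => by ring
    calc ∫ ω, f ω * indc ω ∂μ
        = ∫ ω, ∑ i : Fin d, (f ω * g i ω - f ω * u i ω) ∂μ := by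
          congr 1; ext ω; exact h1 ω
      _ = ∑ i : Fin d, ∫ ω, (f ω * g i ω - f ω * u i ω) ∂μ :=
          integral_finset_sum _ (fun i _ => (hint_fg i).sub (hint_fu i))
      _ = ∑ i : Fin d, ((∫ ω, f ω * g i ω ∂μ) - ∫ ω, f ω * u i ω ∂μ) :=
          Finset.sum_congr rfl fun i _ => integral_sub (hint_fg i) (hint_fu i)
  have hQ : ∫ ω, indc ω ∂μ = ∑ i : Fin d, ((∫ ω, g i ω ∂μ) - ∫ ω, u i ω ∂μ) := by
    calc ∫ ω, indc ω ∂μ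
        = ∫ ω, ∑ i : Fin d, (g i ω - u i ω) ∂μ := by
          congr 1; ext ω; exact hpoint ω
      _ = ∑ i : Fin d, ∫ ω, (g i ω - u i ω) ∂μ :=
          integral_finset_sum _ (fun i _ => (hint_g i).sub (hint_u i))
      _ = ∑ i : Fin d, ((∫ ω, g i ω ∂μ) - ∫ ω, u i ω ∂μ) :=
          Finset.sum_congr rfl fun i _ => integral_sub (hint_g i) (hint_u i)
  -- FKG for u
  have hfkg : ∀ i, m * (∫ ω, u i ω ∂μ) ≤ ∫ ω, f ω * u i ω ∂μ :=
    fun i => hFKG f (u i) hf (hu_mono i)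
  -- key sum inequality
  have hkey : (∫ ω, f ω * indc ω ∂μ) - m * ∫ ω, indc ω ∂μ
      ≤ ∑ i : Fin d, ((∫ ω, f ω * g i ω ∂μ) - m * ∫ ω, g i ω ∂μ) := by
    rw [hN, hQ, Finset.mul_sum, ← Finset.sum_sub_distrib]
    apply Finset.sum_le_sum
    intro i _
    have h := hfkg i
    rw [mul_sub]
    linarith
  -- final arithmetic
  have hfinal : m * p - ∫ ω in Cx, f ω ∂μ
      ≤ ∑ i : Fin d, ((∫ ω, f ω * g i ω ∂μ) - m * ∫ ω, g i ω ∂μ) := by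
    rw [hI]
    rw [hq] at hkey
    linarith [hkey, hsplit]
  calc m - (∫ ω in Cx, f ω ∂μ) / p
      = (m * p - ∫ ω in Cx, f ω ∂μ) / p := by
        rw [sub_div, mul_div_assoc, div_self hpne, mul_one]
    _ ≤ (∑ i : Fin d, ((∫ ω, f ω * g i ω ∂μ) - m * ∫ ω, g i ω ∂μ)) / p := by
        exact (div_le_div_iff_of_pos_right hpos).mpr hfinal
    _ = (1 / p) * ∑ i : Fin d, ((∫ ω, f ω * g i ω ∂μ) - m * ∫ ω, g i ω ∂μ) := by
        ring
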